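/- Let A be an m×k complex matrix with SVD A = U_A Σ_A V_A^* (U_A of size m×k with orthonormal columns, V_A k×k unitary), and let B be a k×n complex matrix with SVD B = U_B Σ_B V_B^* (U_B k×k unitary, V_B of size n×k with orthonormal columns). Let W = Σ_A V_A^* U_B Σ_B and let W = U_W Σ_W V_W^* be an SVD of W with U_W, V_W k×k unitary. Then the m×k matrix U_A U_W and the n×k matrix V_B V_W have orthonormal columns and AB = (U_A U_W) Σ_W (V_B V_W)^*, so that this factorization is an SVD of AB. -/
import Mathlib

open Matrix

theorem product_svd_factorization {m n k : ℕ}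
    (A : Matrix (Fin m) (Fin k) ℂ) (B : Matrix (Fin k) (Fin n) ℂ)
    (UA : Matrix (Fin m) (Fin k) ℂ) (a : Fin k → ℝ) (VA : Matrix (Fin k) (Fin k) ℂ)
    (hUA : UAᴴ * UA = 1) (hVA : VAᴴ * VA = 1) (ha0 : ∀ i, 0 ≤ a i) (haa : Antitone a)
    (hA : A = UA * Matrix.diagonal (fun i => (a i : ℂ)) * VAᴴ)
    (UB : Matrix (Fin k) (Fin k) ℂ) (b : Fin k → ℝ) (VB : Matrix (Fin n) (Fin k) ℂ)
    (hUB : UBᴴ * UB = 1) (hVB : VBᴴ * VB = 1) (hb0 : ∀ i, 0 ≤ b i) (hba : Antitone b)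
    (hB : B = UB * Matrix.diagonal (fun i => (b i : ℂ)) * VBᴴ)
    (W : Matrix (Fin k) (Fin k) ℂ)
    (hW : W = Matrix.diagonal (fun i => (a i : ℂ)) * VAᴴ * UB *
      Matrix.diagonal (fun i => (b i : ℂ)))
    (UW : Matrix (Fin k) (Fin k) ℂ) (w : Fin k → ℝ) (VW : Matrix (Fin k) (Fin k) ℂ)
    (hUW : UWᴴ * UW = 1) (hVW : VWᴴ * VW = 1) (hw0 : ∀ i, 0 ≤ w i) (hwa : Antitone w)
    (hWsvd : W = UW * Matrix.diagonal (fun i => (w i : ℂ)) * VWᴴ) :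
    (UA * UW)ᴴ * (UA * UW) = 1 ∧ (VB * VW)ᴴ * (VB * VW) = 1 ∧
      A * B = (UA * UW) * Matrix.diagonal (fun i => (w i : ℂ)) * (VB * VW)ᴴ := by
  refine ⟨?_, ?_, ?_⟩
  · rw [conjTranspose_mul, Matrix.mul_assoc, ← Matrix.mul_assoc UAᴴ, hUA,
      Matrix.one_mul, hUW]
  · rw [conjTranspose_mul, Matrix.mul_assoc, ← Matrix.mul_assoc VBᴴ, hVB,
      Matrix.one_mul, hVW]
  · calc A * B = UA * (Matrix.diagonal (fun i => (a i : ℂ)) * VAᴴ * UB *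
        Matrix.diagonal (fun i => (b i : ℂ))) * VBᴴ := by
          rw [hA, hB]; simp only [Matrix.mul_assoc]
      _ = UA * W * VBᴴ := by rw [hW]
      _ = (UA * UW) * Matrix.diagonal (fun i => (w i : ℂ)) * (VB * VW)ᴴ := by
          rw [hWsvd, conjTranspose_mul]; simp only [Matrix.mul_assoc]
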